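/- Let H be a complex Hilbert space, let T be a densely defined symmetric unbounded operator on H, and assume B is a bounded operator on H with B x in the domain of T and T(Bx) − i·Bx = x for all x, and B(Tψ − iψ) = ψ for all ψ in the domain of T (B = (T − i)⁻¹). Suppose Q is a bounded operator on H which is a parametrix for T, i.e. the range of Q is contained in the domain of T and there exist compact bounded operators K₁, K₂ with T(Qx) − x = K₁ x for all x ∈ H and Q(Tψ) − ψ = K₂ ψ for all ψ in the domain of T. Let R be a symmetric unbounded operator whose domain contains the domain of T, such that there is a compact bounded operator K with K x = R(Bx) for all x. Then Q is also a parametrix for T + R: there exist compact bounded operators K₁', K₂' with T(Qx) + R(Qx) − x = K₁' x for all x ∈ H and Q(Tψ + Rψ) − ψ = K₂' ψ for all ψ in the domain of T. -/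

import Mathlib

open scoped InnerProductSpace

set_option maxHeartbeats 400000 in

theorem aux_isCompactOperator_adjoint {H : Type*} [NormedAddCommGroup H]
    [InnerProductSpace ℂ H] [CompleteSpace H]
    {A : H →L[ℂ] H} (hA : IsCompactOperator (⇑A)) :
    IsCompactOperator (⇑(ContinuousLinearMap.adjoint A)) := by
  classical
  set A' := ContinuousLinearMap.adjoint A with hA'def
  -- A ∘ A' is compact
  have hAA : IsCompactOperator (⇑A ∘ ⇑A') := hA.comp_clm A'
  have hAAtb : TotallyBounded ((⇑A ∘ ⇑A') '' Metric.closedBall 0 1) := by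
    have h0 : IsCompactOperator (⇑(A.comp A' : H →ₗ[ℂ] H)) := hAA
    have := h0.isCompact_closure_image_closedBall (𝕜₁ := ℂ) 1
    have h1 : ((⇑A ∘ ⇑A') '' Metric.closedBall 0 1)
        = (⇑(A.comp A' : H →ₗ[ℂ] H) '' Metric.closedBall 0 1) := rfl
    rw [h1]
    exact this.totallyBounded.subset subset_closure
  -- key inequality : ‖A' u‖^2 ≤ ‖u‖ * ‖A (A' u)‖
  have hineq : ∀ u : H, ‖A' u‖ ^ 2 ≤ ‖u‖ * ‖A (A' u)‖ := by
    intro u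
    have h1 : (⟪A' u, A' u⟫_ℂ) = ⟪u, A (A' u)⟫_ℂ := by
      rw [hA'def, ContinuousLinearMap.adjoint_inner_left]
    have h2 : RCLike.re ⟪A' u, A' u⟫_ℂ = ‖A' u‖ ^ 2 := inner_self_eq_norm_sq _
    have h3 : RCLike.re ⟪u, A (A' u)⟫_ℂ ≤ ‖⟪u, A (A' u)⟫_ℂ‖ := RCLike.re_le_norm _
    have h4 : ‖⟪u, A (A' u)⟫_ℂ‖ ≤ ‖u‖ * ‖A (A' u)‖ := norm_inner_le_norm _ _
    calc ‖A' u‖ ^ 2 = RCLike.re ⟪u, A (A' u)⟫_ℂ := by rw [← h1, h2]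
      _ ≤ ‖u‖ * ‖A (A' u)‖ := h3.trans h4
  -- totally bounded image
  have htb : TotallyBounded (⇑A' '' Metric.closedBall 0 1) := by
    rw [Metric.totallyBounded_iff]
    intro ε hε
    obtain ⟨t, htfin, htsub⟩ := Metric.totallyBounded_iff.mp hAAtb (ε ^ 2 / 8) (by positivity)
    refine ⟨(fun y => if h : ∃ x ∈ Metric.closedBall (0 : H) 1,
        A (A' x) ∈ Metric.ball y (ε ^ 2 / 8) then A' h.choose else 0) '' t,
      htfin.image _, ?_⟩
    rintro _ ⟨x, hx, rfl⟩
    have hximg : A (A' x) ∈ ⋃ y ∈ t, Metric.ball y (ε ^ 2 / 8) := htsub ⟨x, hx, rfl⟩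
    simp only [Set.mem_iUnion] at hximg
    obtain ⟨y, hyt, hxy⟩ := hximg
    have hex : ∃ x' ∈ Metric.closedBall (0 : H) 1, A (A' x') ∈ Metric.ball y (ε ^ 2 / 8) :=
      ⟨x, hx, hxy⟩
    obtain ⟨hx'ball, hx'mem⟩ := hex.choose_spec
    set x' := hex.choose
    -- distance estimate
    have hdist : ‖A' x - A' x'‖ < ε := by
      have h5 : ‖A (A' (x - x'))‖ < ε ^ 2 / 4 := by
        have : A (A' (x - x')) = A (A' x) - A (A' x') := by simp [map_sub]
        rw [this]
        calc ‖A (A' x) - A (A' x')‖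
            ≤ ‖A (A' x) - y‖ + ‖y - A (A' x')‖ := norm_sub_le_norm_sub_add_norm_sub _ _ _
          _ < ε ^ 2 / 8 + ε ^ 2 / 8 := by
              rw [Metric.mem_ball, dist_eq_norm] at hxy hx'mem
              have := hx'mem
              rw [norm_sub_rev] at this
              exact add_lt_add hxy this
          _ = ε ^ 2 / 4 := by ring
      have h6 : ‖x - x'‖ ≤ 2 := by
        rw [Metric.mem_closedBall, dist_zero_right] at hx hx'ball
        calc ‖x - x'‖ ≤ ‖x‖ + ‖x'‖ := norm_sub_le _ _
          _ ≤ 2 := by linarith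
      have h7 : ‖A' (x - x')‖ ^ 2 ≤ ‖x - x'‖ * ‖A (A' (x - x'))‖ := hineq _
      have h8 : ‖A' (x - x')‖ ^ 2 < ε ^ 2 := by
        calc ‖A' (x - x')‖ ^ 2 ≤ ‖x - x'‖ * ‖A (A' (x - x'))‖ := h7
          _ ≤ 2 * ‖A (A' (x - x'))‖ := by
              have := norm_nonneg (A (A' (x - x')))
              nlinarith
          _ < 2 * (ε ^ 2 / 4) := by linarith
          _ ≤ ε ^ 2 := by nlinarith
      have h9 : A' (x - x') = A' x - A' x' := by simp [map_sub]
      rw [h9] at h8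
      nlinarith [norm_nonneg (A' x - A' x'), sq_abs ε, abs_nonneg ε, hε]
    simp only [Set.mem_iUnion]
    refine ⟨_, ⟨y, hyt, rfl⟩, ?_⟩
    have hval : (if h : ∃ x' ∈ Metric.closedBall (0:H) 1,
        A (A' x') ∈ Metric.ball y (ε ^ 2 / 8) then A' h.choose else 0) = A' hex.choose :=
      dif_pos hex
    show A' x ∈ Metric.ball (if h : ∃ x' ∈ Metric.closedBall (0:H) 1,
        A (A' x') ∈ Metric.ball y (ε ^ 2 / 8) then A' h.choose else 0) ε
    rw [hval, Metric.mem_ball, dist_eq_norm]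
    exact hdist
  -- conclude
  refine ⟨closure (⇑A' '' Metric.closedBall 0 1),
    TotallyBounded.isCompact_of_isClosed htb.closure isClosed_closure, ?_⟩
  filter_upwards [Metric.closedBall_mem_nhds (0 : H) one_pos] with v hv
  exact subset_closure ⟨v, hv, rfl⟩

set_option maxHeartbeats 1600000 in
theorem parametrix_of_relatively_compact_perturbation
    {H : Type*} [NormedAddCommGroup H] [InnerProductSpace ℂ H] [CompleteSpace H]
    (T R : H →ₗ.[ℂ] H)
    (hdense : Dense (T.domain : Set H))
    (hTsymm : ∀ ψ φ : T.domain, ⟪T ψ, (φ : H)⟫_ℂ = ⟪(ψ : H), T φ⟫_ℂ)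
    (hRsymm : ∀ ψ φ : R.domain, ⟪R ψ, (φ : H)⟫_ℂ = ⟪(ψ : H), R φ⟫_ℂ)
    (hdom : T.domain ≤ R.domain)
    (B : H →L[ℂ] H)
    (hBmem : ∀ x : H, B x ∈ T.domain)
    (hBright : ∀ x : H, T ⟨B x, hBmem x⟩ - Complex.I • B x = x)
    (hBleft : ∀ ψ : T.domain, B (T ψ - Complex.I • (ψ : H)) = (ψ : H))
    (Q : H →L[ℂ] H)
    (hQmem : ∀ x : H, Q x ∈ T.domain)
    (K₁ K₂ : H →L[ℂ] H) (hK₁ : IsCompactOperator K₁) (hK₂ : IsCompactOperator K₂)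
    (hQright : ∀ x : H, T ⟨Q x, hQmem x⟩ - x = K₁ x)
    (hQleft : ∀ ψ : T.domain, Q (T ψ) - (ψ : H) = K₂ (ψ : H))
    (K : H →L[ℂ] H) (hK : IsCompactOperator K)
    (hKR : ∀ x : H, K x = R ⟨B x, hdom (hBmem x)⟩) :
    ∃ K₁' K₂' : H →L[ℂ] H, IsCompactOperator K₁' ∧ IsCompactOperator K₂' ∧
      (∀ x : H, T ⟨Q x, hQmem x⟩ + R ⟨Q x, hdom (hQmem x)⟩ - x = K₁' x) ∧
      (∀ ψ : T.domain, Q (T ψ + R ⟨(ψ : H), hdom ψ.2⟩) - (ψ : H) = K₂' (ψ : H)) := by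
  classical
  -- the Cayley transform
  set U : H →L[ℂ] H := ContinuousLinearMap.id ℂ H + (2 * Complex.I) • B with hUdef
  have hUapp : ∀ x : H, U x = x + (2 * Complex.I) • B x := by
    intro x
    simp [hUdef, ContinuousLinearMap.add_apply, ContinuousLinearMap.smul_apply]
  -- T is `real' on the diagonal
  have hTreal : ∀ ψ : T.domain, (⟪T ψ, (ψ : H)⟫_ℂ).im = 0 := by
    intro ψ
    have h1 : ⟪T ψ, (ψ : H)⟫_ℂ = ⟪(ψ : H), T ψ⟫_ℂ := hTsymm ψ ψ
    have h2 : (starRingEnd ℂ) ⟪T ψ, (ψ : H)⟫_ℂ = ⟪T ψ, (ψ : H)⟫_ℂ := by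
      rw [inner_conj_symm]; exact h1.symm
    exact Complex.conj_eq_iff_im.mp h2
  have hBT : ∀ x : H, T ⟨B x, hBmem x⟩ = x + Complex.I • B x := by
    intro x
    have h := hBright x
    rw [sub_eq_iff_eq_add] at h
    exact h
  -- U is an isometry
  have hUnorm : ∀ x : H, ‖U x‖ = ‖x‖ := by
    intro x
    have hre : RCLike.re ⟪T (⟨B x, hBmem x⟩ : T.domain), Complex.I • B x⟫_ℂ = 0 := by
      rw [inner_smul_right]
      have h0 : (⟪T (⟨B x, hBmem x⟩ : T.domain), B x⟫_ℂ).im = 0 := hTreal ⟨B x, hBmem x⟩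
      simp [RCLike.re, Complex.mul_im, Complex.mul_re, h0]
    have hU2 : U x = T (⟨B x, hBmem x⟩ : T.domain) + Complex.I • B x := by
      rw [hUapp, hBT x]; module
    have hx2 : x = T (⟨B x, hBmem x⟩ : T.domain) - Complex.I • B x := (hBright x).symm
    have e1 : ‖U x‖ ^ 2 = ‖T (⟨B x, hBmem x⟩ : T.domain)‖ ^ 2 + ‖Complex.I • B x‖ ^ 2 := by
      rw [hU2, norm_add_sq (𝕜 := ℂ), hre]; ring
    have e2 : ‖x‖ ^ 2 = ‖T (⟨B x, hBmem x⟩ : T.domain)‖ ^ 2 + ‖Complex.I • B x‖ ^ 2 := by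
      conv_lhs => rw [hx2]
      rw [norm_sub_sq (𝕜 := ℂ), hre]; ring
    nlinarith [norm_nonneg (U x), norm_nonneg x]
  -- the fundamental left-parametrix identity for 1 + U
  have hQz : ∀ z : H, Q z + Complex.I • Q (B z) = B z + K₂ (B z) := by
    intro z
    have h1 := hQleft ⟨B z, hBmem z⟩
    rw [sub_eq_iff_eq_add, hBT z, map_add, map_smul] at h1
    have h2 : ((⟨B z, hBmem z⟩ : T.domain) : H) = B z := rfl
    rw [h2] at h1
    rw [h1]; abel
  have hkey : ∀ x : H, x = (2⁻¹ : ℂ) • (x + U x) - (2⁻¹ * Complex.I) • Q (x + U x)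
      + Complex.I • K₂ (B x) := by
    intro x
    have e1 : x + U x = (2 : ℂ) • x + ((2 : ℂ) * Complex.I) • B x := by
      rw [hUapp]; module
    have e2 : Q (x + U x) = (2 : ℂ) • (B x + K₂ (B x)) := by
      rw [e1, map_add, map_smul, map_smul, ← hQz x]; module
    rw [e2, e1]
    have hI : Complex.I * Complex.I = -1 := Complex.I_mul_I
    match_scalars <;> simp [hI] <;> ring
  -- U is surjective
  have hUsurj : Function.Surjective (⇑U) := by
    by_contra hns
    have hUip : ∀ a b : H, ⟪U a, U b⟫_ℂ = ⟪a, b⟫_ℂ := fun a b =>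
      LinearIsometry.inner_map_map ⟨(U : H →ₗ[ℂ] H), hUnorm⟩ a b
    have hiso : Isometry (⇑U) := AddMonoidHomClass.isometry_of_norm U hUnorm
    have hclosed : IsClosed (Set.range (⇑U)) := hiso.isClosedEmbedding.isClosed_range
    set M : Submodule ℂ H := LinearMap.range (U : H →ₗ[ℂ] H) with hMdef
    have hMcoe : (M : Set H) = Set.range (⇑U) := rfl
    haveI : CompleteSpace M := (hMcoe ▸ hclosed).completeSpace_coe
    have hMne : M ≠ ⊤ := fun htop => hns (LinearMap.range_eq_top.mp htop)
    have hObot : Mᗮ ≠ ⊥ := fun hbot => hMne (Submodule.orthogonal_eq_bot_iff.mp hbot)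
    obtain ⟨w₀, hw₀M, hw₀ne⟩ := Submodule.exists_mem_ne_zero_of_ne_bot hObot
    set w : H := ((‖w₀‖⁻¹ : ℝ) : ℂ) • w₀ with hwdef
    have hwnorm : ‖w‖ = 1 := by
      rw [hwdef, norm_smul, Complex.norm_real, norm_inv, norm_norm,
        inv_mul_cancel₀ (norm_ne_zero_iff.mpr hw₀ne)]
    have hwM : w ∈ Mᗮ := Submodule.smul_mem _ _ hw₀M
    have hwU : ∀ x : H, ⟪U x, w⟫_ℂ = 0 := fun x =>
      (Submodule.mem_orthogonal M w).mp hwM (U x) (LinearMap.mem_range.mpr ⟨x, rfl⟩)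
    -- the orthonormal sequence e k = U^k w
    set e : ℕ → H := fun k => (U ^ k) w with hedef
    have he0 : e 0 = w := by simp [hedef]
    have hesucc : ∀ k, e (k + 1) = U (e k) := by
      intro k
      have : U ^ (k + 1) = U * U ^ k := pow_succ' U k
      simp [hedef, this, ContinuousLinearMap.mul_apply]
      rw [← Function.iterate_succ_apply, Function.iterate_succ_apply']
    have henorm : ∀ k, ‖e k‖ = 1 := by
      intro k; induction k with
      | zero => rw [he0]; exact hwnorm
      | succ m ih => rw [hesucc, hUnorm]; exact ih
    have heorth : ∀ j d : ℕ, ⟪e j, e (j + d + 1)⟫_ℂ = 0 := by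
      intro j
      induction j with
      | zero =>
        intro d
        have h1 : e (0 + d + 1) = U (e d) := by rw [show 0 + d + 1 = d + 1 by omega, hesucc]
        rw [he0, h1, ← inner_conj_symm, hwU, map_zero]
      | succ m ih =>
        intro d
        have h2 : e (m + 1 + d + 1) = U (e (m + d + 1)) := by
          rw [show m + 1 + d + 1 = (m + d + 1) + 1 by omega, hesucc]
        rw [hesucc, h2, hUip]
        exact ih d
    have heorth' : ∀ j k : ℕ, j ≠ k → ⟪e j, e k⟫_ℂ = 0 := by
      intro j k hjk
      rcases lt_or_gt_of_ne hjk with h | h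
      · rw [show k = j + (k - j - 1) + 1 by omega]; exact heorth _ _
      · rw [← inner_conj_symm, show j = k + (j - k - 1) + 1 by omega, heorth, map_zero]
    have horth : Orthonormal ℂ e := by
      rw [orthonormal_iff_ite]
      intro i j
      by_cases h : i = j
      · subst h
        simp [inner_self_eq_norm_sq_to_K, henorm i]
      · rw [heorth' i j h, if_neg h]
    -- the Weyl sequence
    set y : ℕ → H := fun nn => ∑ k ∈ Finset.range nn, ((-1 : ℂ)) ^ k • e k with hydef
    have hyin : ∀ nn mm : ℕ, nn ≤ mm → ⟪y mm, y nn⟫_ℂ = (nn : ℂ) := by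
      intro nn mm hnm
      have hsub : Finset.range nn ⊆ Finset.range mm := Finset.range_subset_range.mpr hnm
      have hyn : y nn = ∑ k ∈ Finset.range mm,
          (if k < nn then ((-1 : ℂ)) ^ k else 0) • e k := by
        rw [hydef]
        rw [← Finset.sum_subset hsub]
        · apply Finset.sum_congr rfl
          intro k hk
          rw [if_pos (Finset.mem_range.mp hk)]
        · intro k _ hk
          rw [if_neg (fun h => hk (Finset.mem_range.mpr h)), zero_smul]
      rw [hyn, hydef]
      rw [Orthonormal.inner_sum horth]
      have : ∀ k ∈ Finset.range mm,
          (starRingEnd ℂ) ((-1 : ℂ) ^ k) * (if k < nn then ((-1 : ℂ)) ^ k else 0)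
          = if k < nn then 1 else 0 := by
        intro k _
        by_cases h : k < nn
        · rw [if_pos h, if_pos h, map_pow, map_neg, map_one, ← pow_add]
          rw [show k + k = 2 * k by ring, pow_mul]
          norm_num
        · rw [if_neg h, if_neg h, mul_zero]
      rw [Finset.sum_congr rfl this, Finset.sum_boole]
      have hfil : (Finset.range mm).filter (fun k => k < nn) = Finset.range nn := by
        ext k
        simp only [Finset.mem_filter, Finset.mem_range]
        omega
      rw [hfil, Finset.card_range]
    have hynorm : ∀ nn : ℕ, ‖y nn‖ = Real.sqrt nn := by
      intro nn
      have h1 : RCLike.re ⟪y nn, y nn⟫_ℂ = ‖y nn‖ ^ 2 := inner_self_eq_norm_sq _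
      rw [hyin nn nn le_rfl] at h1
      have h2 : RCLike.re ((nn : ℂ)) = (nn : ℝ) := by simp
      rw [h2] at h1
      rw [h1, Real.sqrt_sq (norm_nonneg _)]
    set xx : ℕ → H := fun nn => (((Real.sqrt nn)⁻¹ : ℝ) : ℂ) • y nn with hxxdef
    have hxnorm : ∀ nn : ℕ, 1 ≤ nn → ‖xx nn‖ = 1 := by
      intro nn h1
      have hpos : 0 < Real.sqrt nn := Real.sqrt_pos.mpr (by exact_mod_cast h1)
      rw [hxxdef]
      simp only [norm_smul, hynorm, Complex.norm_real, Real.norm_eq_abs, abs_inv,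
        abs_of_pos hpos]
      rw [inv_mul_cancel₀ (ne_of_gt hpos)]
    have hxin : ∀ nn mm : ℕ, 1 ≤ nn → nn ≤ mm →
        RCLike.re ⟪xx mm, xx nn⟫_ℂ = Real.sqrt nn * (Real.sqrt mm)⁻¹ := by
      intro nn mm h1 hnm
      rw [hxxdef]
      simp only [inner_smul_left, inner_smul_right]
      rw [hyin nn mm hnm, Complex.conj_ofReal]
      have hc : (((Real.sqrt nn)⁻¹ : ℝ) : ℂ) * ((((Real.sqrt mm)⁻¹ : ℝ) : ℂ) * (nn : ℂ))
          = ((((Real.sqrt nn)⁻¹ * ((Real.sqrt mm)⁻¹ * nn)) : ℝ) : ℂ) := by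
        push_cast
        have hnn : (0:ℝ) < nn := by exact_mod_cast h1
        have hmm : (0:ℝ) < mm := by exact_mod_cast (h1.trans hnm)
        have hsn : (0:ℝ) < Real.sqrt nn := Real.sqrt_pos.mpr hnn
        have hsm : (0:ℝ) < Real.sqrt mm := Real.sqrt_pos.mpr hmm
        field_simp
      rw [hc]
      have hre : RCLike.re ((((Real.sqrt nn)⁻¹ * ((Real.sqrt mm)⁻¹ * nn)) : ℝ) : ℂ)
          = (Real.sqrt nn)⁻¹ * ((Real.sqrt mm)⁻¹ * nn) := by
        rw [RCLike.re_to_complex, Complex.ofReal_re]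
      rw [hre]
      have h2 : (Real.sqrt nn)⁻¹ * (nn : ℝ) = Real.sqrt nn := by
        rw [inv_mul_eq_div, Real.div_sqrt]
      rw [show (Real.sqrt nn)⁻¹ * ((Real.sqrt mm)⁻¹ * (nn:ℝ))
        = (Real.sqrt nn)⁻¹ * (nn : ℝ) * (Real.sqrt mm)⁻¹ by ring, h2]
    -- separation of the Weyl vectors
    have hsep : ∀ nn mm : ℕ, 1 ≤ nn → 4 * nn ≤ mm → (2⁻¹ : ℝ) ≤ ‖xx mm - xx nn‖ := by
      intro nn mm h1 h4
      have hm1 : 1 ≤ mm := by omega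
      have hnm : nn ≤ mm := by omega
      have hfrac : Real.sqrt nn * (Real.sqrt mm)⁻¹ ≤ 2⁻¹ := by
        have hs4 : Real.sqrt ((4:ℝ) * nn) ≤ Real.sqrt mm := by
          apply Real.sqrt_le_sqrt; exact_mod_cast h4
        have hs4' : Real.sqrt ((4 : ℝ) * nn) = 2 * Real.sqrt nn := by
          rw [show (4:ℝ) = 2^2 by norm_num, Real.sqrt_mul (by positivity),
            Real.sqrt_sq (by norm_num : (0:ℝ) ≤ 2)]
        have h2n : 2 * Real.sqrt nn ≤ Real.sqrt mm := by
          rw [hs4'] at hs4; exact hs4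
        have hpn : 0 < Real.sqrt nn := Real.sqrt_pos.mpr (by exact_mod_cast h1)
        have hpm : 0 < Real.sqrt mm := by linarith
        rw [mul_inv_le_iff₀ hpm]
        linarith
      have hip : RCLike.re ⟪xx mm, xx mm - xx nn⟫_ℂ = 1 - Real.sqrt nn * (Real.sqrt mm)⁻¹ := by
        rw [inner_sub_right, map_sub, hxin nn mm h1 hnm]
        have : RCLike.re ⟪xx mm, xx mm⟫_ℂ = 1 := by
          rw [inner_self_eq_norm_sq, hxnorm mm hm1]; norm_num
        rw [this]
      have hb : RCLike.re ⟪xx mm, xx mm - xx nn⟫_ℂ ≤ ‖xx mm - xx nn‖ := by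
        calc RCLike.re ⟪xx mm, xx mm - xx nn⟫_ℂ ≤ ‖⟪xx mm, xx mm - xx nn⟫_ℂ‖ :=
              RCLike.re_le_norm _
          _ ≤ ‖xx mm‖ * ‖xx mm - xx nn‖ := norm_inner_le_norm _ _
          _ = ‖xx mm - xx nn‖ := by rw [hxnorm mm hm1, one_mul]
      rw [hip] at hb
      linarith
    -- the almost-kernel property
    have hUy : ∀ nn : ℕ, y (nn + 1) + U (y (nn + 1)) = e 0 + ((-1 : ℂ)) ^ nn • e (nn + 1) := by
      intro nn
      induction nn with
      | zero =>
        have hy1 : y 1 = e 0 := by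
          rw [hydef]; simp
        rw [hy1, pow_zero, one_smul, ← hesucc 0]
      | succ m ih =>
        have hy2 : y (m + 2) = y (m + 1) + ((-1 : ℂ)) ^ (m + 1) • e (m + 1) := by
          rw [hydef]; exact Finset.sum_range_succ _ _
        have hUe : U (e (m + 1)) = e (m + 2) := (hesucc (m + 1)).symm
        have hpow : ((-1 : ℂ)) ^ (m + 1) = -((-1 : ℂ)) ^ m := by rw [pow_succ]; ring
        rw [hy2, map_add, map_smul, hUe, hpow]
        rw [show y (m + 1) + -(-1 : ℂ) ^ m • e (m + 1) + (U (y (m + 1)) + -(-1 : ℂ) ^ m • e (m + 2))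
          = (y (m + 1) + U (y (m + 1))) + (-(-1 : ℂ) ^ m • e (m + 1) + -(-1 : ℂ) ^ m • e (m + 2)) by abel, ih]
        module
    have hUx : ∀ nn : ℕ, 1 ≤ nn → ‖xx nn + U (xx nn)‖ ≤ 2 * (Real.sqrt nn)⁻¹ := by
      intro nn h1
      obtain ⟨m, rfl⟩ : ∃ m, nn = m + 1 := ⟨nn - 1, by omega⟩
      have hxU : xx (m + 1) + U (xx (m + 1))
          = (((Real.sqrt ((m + 1 : ℕ)))⁻¹ : ℝ) : ℂ) • (y (m + 1) + U (y (m + 1))) := by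
        rw [hxxdef]
        simp only [map_smul, smul_add]
      rw [hxU, hUy m, norm_smul, Complex.norm_real]
      have hnn : (0:ℝ) ≤ (Real.sqrt ((m + 1 : ℕ)))⁻¹ := by positivity
      rw [Real.norm_eq_abs, abs_of_nonneg hnn]
      have hbound : ‖e 0 + ((-1 : ℂ)) ^ m • e (m + 1)‖ ≤ 2 := by
        calc ‖e 0 + ((-1 : ℂ)) ^ m • e (m + 1)‖
            ≤ ‖e 0‖ + ‖((-1 : ℂ)) ^ m • e (m + 1)‖ := norm_add_le _ _
          _ ≤ 2 := by
              have hone : ‖((-1 : ℂ)) ^ m‖ = 1 := by simp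
              rw [norm_smul, henorm, henorm, hone]
              norm_num
      calc (Real.sqrt ((m + 1 : ℕ)))⁻¹ * ‖e 0 + ((-1 : ℂ)) ^ m • e (m + 1)‖
          ≤ (Real.sqrt ((m + 1 : ℕ)))⁻¹ * 2 := by
            apply mul_le_mul_of_nonneg_left hbound hnn
        _ = 2 * (Real.sqrt ((m + 1 : ℕ)))⁻¹ := by ring
    -- the residual estimate
    have hres : ∀ nn : ℕ, 1 ≤ nn →
        ‖xx nn - Complex.I • K₂ (B (xx nn))‖ ≤ (1 + ‖Q‖) * (Real.sqrt nn)⁻¹ := by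
      intro nn h1
      have hk := hkey (xx nn)
      have hr : xx nn - Complex.I • K₂ (B (xx nn))
          = (2⁻¹ : ℂ) • (xx nn + U (xx nn)) - (2⁻¹ * Complex.I) • Q (xx nn + U (xx nn)) := by
        rw [sub_eq_iff_eq_add]
        exact hk
      rw [hr]
      have h2a : ‖(2⁻¹ : ℂ) • (xx nn + U (xx nn))‖ ≤ 2⁻¹ * (2 * (Real.sqrt nn)⁻¹) := by
        rw [norm_smul]
        have hh : ‖(2⁻¹ : ℂ)‖ = 2⁻¹ := by
          rw [norm_inv]
          norm_num
        rw [hh]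
        exact mul_le_mul_of_nonneg_left (hUx nn h1) (by norm_num)
      have h2b : ‖(2⁻¹ * Complex.I : ℂ) • Q (xx nn + U (xx nn))‖
          ≤ 2⁻¹ * (‖Q‖ * (2 * (Real.sqrt nn)⁻¹)) := by
        rw [norm_smul]
        have hn2 : ‖(2⁻¹ * Complex.I : ℂ)‖ = 2⁻¹ := by
          rw [norm_mul, Complex.norm_I, mul_one, norm_inv]
          norm_num
        rw [hn2]
        have hq := Q.le_opNorm (xx nn + U (xx nn))
        have h3 := hUx nn h1
        have hQ0 : (0:ℝ) ≤ ‖Q‖ := norm_nonneg _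
        have : ‖Q (xx nn + U (xx nn))‖ ≤ ‖Q‖ * (2 * (Real.sqrt nn)⁻¹) :=
          hq.trans (mul_le_mul_of_nonneg_left h3 hQ0)
        exact mul_le_mul_of_nonneg_left this (by norm_num)
      calc ‖(2⁻¹ : ℂ) • (xx nn + U (xx nn)) - (2⁻¹ * Complex.I) • Q (xx nn + U (xx nn))‖
          ≤ ‖(2⁻¹ : ℂ) • (xx nn + U (xx nn))‖ + ‖(2⁻¹ * Complex.I : ℂ) • Q (xx nn + U (xx nn))‖ :=
            norm_sub_le _ _
        _ ≤ 2⁻¹ * (2 * (Real.sqrt nn)⁻¹) + 2⁻¹ * (‖Q‖ * (2 * (Real.sqrt nn)⁻¹)) := by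
            linarith
        _ = (1 + ‖Q‖) * (Real.sqrt nn)⁻¹ := by ring
    -- compactness contradiction
    obtain ⟨Kset, hKsetc, hKnb⟩ := (hK₂.comp_clm B).smul Complex.I
    rw [Metric.mem_nhds_iff] at hKnb
    obtain ⟨ε, hε, hball⟩ := hKnb
    set Creal : ℝ := 1 + ‖Q‖ with hCreal
    have hC1 : (1:ℝ) ≤ Creal := by rw [hCreal]; have := norm_nonneg Q; linarith
    set N : ℕ := max 1 (Nat.ceil ((16 * Creal) ^ 2)) with hNdef
    have hN1 : 1 ≤ N := le_max_left _ _
    have hNC : Creal * (Real.sqrt N)⁻¹ ≤ 16⁻¹ := by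
      have hN2 : ((16 * Creal) ^ 2 : ℝ) ≤ N := by
        calc ((16 * Creal) ^ 2 : ℝ) ≤ (Nat.ceil ((16 * Creal) ^ 2) : ℝ) := Nat.le_ceil _
          _ ≤ N := by exact_mod_cast Nat.cast_le.mpr (le_max_right _ _)
      have hsN : 16 * Creal ≤ Real.sqrt N := by
        have := Real.sqrt_le_sqrt hN2
        rwa [Real.sqrt_sq (by linarith : (0:ℝ) ≤ 16 * Creal)] at this
      have hpos : 0 < Real.sqrt N := by linarith
      rw [mul_inv_le_iff₀ hpos]
      calc Creal = 16⁻¹ * (16 * Creal) := by ring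
        _ ≤ 16⁻¹ * Real.sqrt N := by linarith
    set nseq : ℕ → ℕ := fun j => N * 4 ^ j with hnseq
    have hnseq1 : ∀ j, 1 ≤ nseq j := by
      intro j
      have : 1 ≤ 4 ^ j := Nat.one_le_pow _ _ (by norm_num)
      calc 1 = 1 * 1 := by ring
        _ ≤ N * 4 ^ j := Nat.mul_le_mul hN1 this
    have hnseqN : ∀ j, N ≤ nseq j := by
      intro j
      have : 1 ≤ 4 ^ j := Nat.one_le_pow _ _ (by norm_num)
      calc N = N * 1 := by ring
        _ ≤ N * 4 ^ j := Nat.mul_le_mul le_rfl this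
    have hnmono : ∀ j j' : ℕ, j < j' → 4 * nseq j ≤ nseq j' := by
      intro j j' hj
      rw [hnseq]
      have : 4 ^ (j + 1) ≤ 4 ^ j' := Nat.pow_le_pow_right (by norm_num) (by omega)
      calc 4 * (N * 4 ^ j) = N * 4 ^ (j + 1) := by ring
        _ ≤ N * 4 ^ j' := Nat.mul_le_mul le_rfl this
    set g : ℕ → H := fun j => ((ε / 2 : ℝ) : ℂ) • (Complex.I • K₂ (B (xx (nseq j)))) with hgdef
    have hgmem : ∀ j, g j ∈ Kset := by
      intro j
      have hv : (((ε / 2 : ℝ) : ℂ) • xx (nseq j)) ∈ Metric.ball (0 : H) ε := by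
        rw [Metric.mem_ball, dist_zero_right, norm_smul, Complex.norm_real,
          hxnorm _ (hnseq1 j), Real.norm_eq_abs, abs_of_pos (by linarith : (0:ℝ) < ε / 2)]
        rw [mul_one]
        linarith
      have := hball hv
      have heq : (Complex.I • (⇑K₂ ∘ ⇑B)) (((ε / 2 : ℝ) : ℂ) • xx (nseq j)) = g j := by
        rw [hgdef]
        simp only [Pi.smul_apply, Function.comp_apply, map_smul]
        rw [smul_comm]
      rwa [← heq]
    have hgsep : ∀ j j' : ℕ, j < j' → ε / 8 ≤ ‖g j' - g j‖ := by
      intro j j' hj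
      set a := nseq j' with hadef
      set b := nseq j with hbdef
      have hb1 : 1 ≤ b := hnseq1 j
      have ha1 : 1 ≤ a := hnseq1 j'
      have h4 : 4 * b ≤ a := hnmono j j' hj
      have hxsep := hsep b a hb1 h4
      have hra := hres a ha1
      have hrb := hres b hb1
      have hNa : Creal * (Real.sqrt a)⁻¹ ≤ 16⁻¹ := by
        have h5 : Real.sqrt N ≤ Real.sqrt a := Real.sqrt_le_sqrt (by exact_mod_cast hnseqN j')
        have hp : 0 < Real.sqrt N := Real.sqrt_pos.mpr (by exact_mod_cast hN1)
        have h6 : (Real.sqrt a)⁻¹ ≤ (Real.sqrt N)⁻¹ := by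
          apply inv_anti₀ hp h5
        calc Creal * (Real.sqrt a)⁻¹ ≤ Creal * (Real.sqrt N)⁻¹ := by
              apply mul_le_mul_of_nonneg_left h6 (by linarith)
          _ ≤ 16⁻¹ := hNC
      have hNb : Creal * (Real.sqrt b)⁻¹ ≤ 16⁻¹ := by
        have h5 : Real.sqrt N ≤ Real.sqrt b := Real.sqrt_le_sqrt (by exact_mod_cast hnseqN j)
        have hp : 0 < Real.sqrt N := Real.sqrt_pos.mpr (by exact_mod_cast hN1)
        have h6 : (Real.sqrt b)⁻¹ ≤ (Real.sqrt N)⁻¹ := by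
          apply inv_anti₀ hp h5
        calc Creal * (Real.sqrt b)⁻¹ ≤ Creal * (Real.sqrt N)⁻¹ := by
              apply mul_le_mul_of_nonneg_left h6 (by linarith)
          _ ≤ 16⁻¹ := hNC
      -- core estimate
      have hcore : (4⁻¹ : ℝ) ≤ ‖Complex.I • K₂ (B (xx a)) - Complex.I • K₂ (B (xx b))‖ := by
        have htri : ‖xx a - xx b‖ ≤ ‖xx a - Complex.I • K₂ (B (xx a))‖
            + ‖Complex.I • K₂ (B (xx a)) - Complex.I • K₂ (B (xx b))‖
            + ‖Complex.I • K₂ (B (xx b)) - xx b‖ := by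
          have := norm_add₃_le (a := xx a - Complex.I • K₂ (B (xx a)))
            (b := Complex.I • K₂ (B (xx a)) - Complex.I • K₂ (B (xx b)))
            (c := Complex.I • K₂ (B (xx b)) - xx b)
          simpa using this
        have hrb' : ‖Complex.I • K₂ (B (xx b)) - xx b‖ ≤ Creal * (Real.sqrt b)⁻¹ := by
          rw [norm_sub_rev]; exact hrb
        have hra' : ‖xx a - Complex.I • K₂ (B (xx a))‖ ≤ Creal * (Real.sqrt a)⁻¹ := hra
        linarith
      have hgg : g j' - g j = ((ε / 2 : ℝ) : ℂ) •
          (Complex.I • K₂ (B (xx a)) - Complex.I • K₂ (B (xx b))) := by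
        rw [hgdef, smul_sub]
      rw [hgg, norm_smul, Complex.norm_real, Real.norm_eq_abs,
        abs_of_pos (by linarith : (0:ℝ) < ε / 2)]
      calc ε / 8 = (ε / 2) * 4⁻¹ := by ring
        _ ≤ (ε / 2) * ‖Complex.I • K₂ (B (xx a)) - Complex.I • K₂ (B (xx b))‖ := by
            apply mul_le_mul_of_nonneg_left hcore (by linarith)
    obtain ⟨p, _, φm, hφmono, hφtend⟩ := hKsetc.tendsto_subseq hgmem
    rw [Metric.tendsto_atTop] at hφtend
    obtain ⟨J, hJ⟩ := hφtend (ε / 17) (by positivity)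
    have h1 := hJ J le_rfl
    have h2 := hJ (J + 1) (by omega)
    have hsep' := hgsep (φm J) (φm (J + 1)) (hφmono (by omega))
    have hd : dist (g (φm (J + 1))) (g (φm J)) < ε / 8 := by
      calc dist (g (φm (J + 1))) (g (φm J))
          ≤ dist (g (φm (J + 1))) p + dist (g (φm J)) p := dist_triangle_right _ _ _
        _ < ε / 17 + ε / 17 := by
            exact add_lt_add (hJ (J+1) (by omega)) (hJ J le_rfl)
        _ < ε / 8 := by linarith
    rw [dist_eq_norm] at hd
    linarith
  -- the inverse of U
  have hUip : ∀ a b : H, ⟪U a, U b⟫_ℂ = ⟪a, b⟫_ℂ := fun a b =>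
    LinearIsometry.inner_map_map ⟨(U : H →ₗ[ℂ] H), hUnorm⟩ a b
  set V : H →L[ℂ] H := ContinuousLinearMap.adjoint U with hVdef
  have hVU : ∀ x : H, V (U x) = x := by
    intro x
    apply ext_inner_right ℂ
    intro v
    rw [hVdef, ContinuousLinearMap.adjoint_inner_left, hUip]
  have hUV : ∀ z : H, U (V z) = z := by
    intro z
    obtain ⟨x, rfl⟩ := hUsurj z
    rw [hVU]
  -- the key inner-product identity
  have hBR : ∀ (ψ : T.domain) (x : H),
      ⟪B (R ⟨(ψ : H), hdom ψ.2⟩), U x⟫_ℂ = ⟪(ψ : H), K x⟫_ℂ := by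
    intro ψ x
    set z : H := R ⟨(ψ : H), hdom ψ.2⟩ with hzdef
    set v : H := B z with hvdef
    have hTv : T ⟨v, hBmem z⟩ = z + Complex.I • v := hBT z
    have hTφ : T ⟨B x, hBmem x⟩ = x + Complex.I • B x := hBT x
    have h1 : ⟪v, U x⟫_ℂ = ⟪v, x⟫_ℂ + 2 * Complex.I * ⟪v, B x⟫_ℂ := by
      rw [hUapp, inner_add_right, inner_smul_right]
    have h2 : ⟪v, x⟫_ℂ = ⟪v, T ⟨B x, hBmem x⟩⟫_ℂ - Complex.I * ⟪v, B x⟫_ℂ := by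
      conv_lhs => rw [← hBright x]
      rw [inner_sub_right, inner_smul_right]
    have h3a : ⟪T ⟨v, hBmem z⟩, B x⟫_ℂ = ⟪v, T ⟨B x, hBmem x⟩⟫_ℂ :=
      hTsymm ⟨v, hBmem z⟩ ⟨B x, hBmem x⟩
    have h4 : ⟪z, B x⟫_ℂ = ⟪(ψ : H), K x⟫_ℂ := by
      have hsym : ⟪z, B x⟫_ℂ = ⟪(ψ : H), R ⟨B x, hdom (hBmem x)⟩⟫_ℂ :=
        hRsymm ⟨(ψ : H), hdom ψ.2⟩ ⟨B x, hdom (hBmem x)⟩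
      rw [hsym, ← hKR x]
    have h3 : ⟪v, T ⟨B x, hBmem x⟩⟫_ℂ = ⟪(ψ : H), K x⟫_ℂ - Complex.I * ⟪v, B x⟫_ℂ := by
      rw [← h3a, hTv, inner_add_left, inner_smul_left, h4]
      simp only [Complex.conj_I]
      ring
    rw [h1, h2, h3]
    ring
  -- the compact operator L with L ψ = B (R ψ) on the domain of T
  set L : H →L[ℂ] H := ContinuousLinearMap.adjoint (K ∘L V) with hLdef
  have hL : ∀ ψ : T.domain, L (ψ : H) = B (R ⟨(ψ : H), hdom ψ.2⟩) := by
    intro ψ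
    apply ext_inner_right ℂ
    intro v
    rw [hLdef, ContinuousLinearMap.adjoint_inner_left]
    show ⟪(ψ : H), K (V v)⟫_ℂ = ⟪B (R ⟨(ψ : H), hdom ψ.2⟩), v⟫_ℂ
    rw [← hBR ψ (V v), hUV v]
  have hLc : IsCompactOperator (⇑L) := by
    rw [hLdef]
    exact aux_isCompactOperator_adjoint (hK.comp_clm V)
  -- the final operators
  set W : H →L[ℂ] H := ContinuousLinearMap.id ℂ H + K₁ - Complex.I • Q with hWdef
  have hWapp : ∀ x : H, W x = x + K₁ x - Complex.I • Q x := by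
    intro x
    simp [hWdef, ContinuousLinearMap.add_apply, ContinuousLinearMap.sub_apply,
      ContinuousLinearMap.smul_apply]
  set P : H →L[ℂ] H := ContinuousLinearMap.id ℂ H + K₂ - Complex.I • Q with hPdef
  have hPapp : ∀ x : H, P x = x + K₂ x - Complex.I • Q x := by
    intro x
    simp [hPdef, ContinuousLinearMap.add_apply, ContinuousLinearMap.sub_apply,
      ContinuousLinearMap.smul_apply]
  refine ⟨K₁ + K ∘L W, K₂ + P ∘L L, ?_, ?_, ?_, ?_⟩
  · exact hK₁.add (hK.comp_clm W)
  · exact hK₂.add (hLc.clm_comp P)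
  · intro x
    have hTQ : T ⟨Q x, hQmem x⟩ = K₁ x + x := by
      have h := hQright x
      rw [sub_eq_iff_eq_add] at h
      exact h
    have hQB : B (W x) = Q x := by
      have h5 := hBleft ⟨Q x, hQmem x⟩
      have h6 : T (⟨Q x, hQmem x⟩ : T.domain) - Complex.I • Q x
          = W x := by
        rw [hTQ, hWapp]; abel
      rw [← h6]
      exact h5
    have hRQ : R ⟨Q x, hdom (hQmem x)⟩ = K (W x) := by
      rw [hKR (W x)]
      congr 1
      exact Subtype.ext hQB.symm
    rw [hTQ, hRQ]
    simp only [ContinuousLinearMap.add_apply, ContinuousLinearMap.comp_apply]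
    abel
  · intro ψ
    have hQT : Q (T ψ) = K₂ (ψ : H) + (ψ : H) := by
      have h := hQleft ψ
      rw [sub_eq_iff_eq_add] at h
      exact h
    have hQR : Q (R ⟨(ψ : H), hdom ψ.2⟩) = P (L (ψ : H)) := by
      have h6 := hQz (R ⟨(ψ : H), hdom ψ.2⟩)
      rw [hPapp, hL ψ]
      rw [eq_sub_iff_add_eq]
      exact h6
    rw [map_add, hQT, hQR]
    simp only [ContinuousLinearMap.add_apply, ContinuousLinearMap.comp_apply]
    abel
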